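/- arXiv:1306.4943 — 2 statements merged into one kernel-verified Lean document; each statement's English description precedes it below -/
import Mathlib

section
/- For any countable family (F_i)_{i ∈ ℕ} of forecasting systems, the set of infinite binary sequences a such that every F_i fails to be high-low calibrated for a is residual in Cantor space. In particular, for any countable family there exist uncountably many sequences for which every F_i fails high-low calibration. -/
open Filter Topology

/-- The forecast probability on day `k` for data sequence `a`:
`F` applied to the first `k` bits of `a`. -/
noncomputable def fc (F : List Bool → ℝ) (a : ℕ → Bool) (k : ℕ) : ℝ :=
  F (List.ofFn (fun i : Fin k => a i))

/-- The discrepancy on day `k`: `a_k - π_k`. -/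
noncomputable def disc (F : List Bool → ℝ) (a : ℕ → Bool) (k : ℕ) : ℝ :=
  (if a k then 1 else 0) - fc F a k

open Classical in
/-- Mean discrepancy over the days `k < n` satisfying `P`. -/
noncomputable def avgDisc (F : List Bool → ℝ) (a : ℕ → Bool) (P : ℕ → Prop) (n : ℕ) : ℝ :=
  (∑ k ∈ (Finset.range n).filter P, disc F a k) /
    (((Finset.range n).filter P).card : ℝ)

/-- `F` is high-low calibrated for `a`: for each of the two groups of days
(forecast `≥ 1/2`, forecast `< 1/2`), either the group is finite or the mean
discrepancy over that group among the first `n` days tends to `0`. -/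
def HighLowCalibrated (F : List Bool → ℝ) (a : ℕ → Bool) : Prop :=
  ({k | 1/2 ≤ fc F a k}.Finite ∨
      Tendsto (avgDisc F a (fun k => 1/2 ≤ fc F a k)) atTop (𝓝 0)) ∧
  ({k | fc F a k < 1/2}.Finite ∨
      Tendsto (avgDisc F a (fun k => fc F a k < 1/2)) atTop (𝓝 0))

open Classical in
/-- The adversarial sequence against `F`: `a_k = 1` iff the forecast is `< 1/2`. -/
noncomputable def adv (F : List Bool → ℝ) : ℕ → Bool
  | k => if F (List.ofFn (fun i : Fin k => adv F i)) < 1/2 then true else false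

/- ---------------- auxiliary development ---------------- -/

open Classical

section Aux

variable {F : List Bool → ℝ} {a b : ℕ → Bool}

lemma fc_congr {k : ℕ} (h : ∀ i < k, a i = b i) : fc F a k = fc F b k := by
  unfold fc
  have heq : (fun i : Fin k => a i) = (fun i : Fin k => b i) :=
    funext fun i => h i i.isLt
  rw [heq]

lemma disc_congr {k : ℕ} (h : ∀ i ≤ k, a i = b i) : disc F a k = disc F b k := by
  unfold disc
  rw [fc_congr (fun i hi => h i hi.le), h k le_rfl]

lemma filterfc_congr {m : ℕ} (h : ∀ i < m, a i = b i) (Q : ℝ → Prop) :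
    (Finset.range m).filter (fun k => Q (fc F a k)) =
      (Finset.range m).filter (fun k => Q (fc F b k)) := by
  apply Finset.filter_congr
  intro k hk
  rw [Finset.mem_range] at hk
  rw [fc_congr (fun i hi => h i (hi.trans hk))]

lemma avgDisc_congr {m : ℕ} (h : ∀ i < m, a i = b i) (Q : ℝ → Prop) :
    avgDisc F a (fun k => Q (fc F a k)) m = avgDisc F b (fun k => Q (fc F b k)) m := by
  unfold avgDisc
  rw [filterfc_congr h Q]
  congr 1
  apply Finset.sum_congr rfl
  intro k hk
  have hk' : k < m := Finset.mem_range.mp (Finset.mem_filter.mp hk).1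
  exact disc_congr (fun i hi => h i (lt_of_le_of_lt hi hk'))

/-- The "bad at stage m" predicate witnessing non-calibration. -/
def badAt (F : List Bool → ℝ) (n : ℕ) (a : ℕ → Bool) (m : ℕ) : Prop :=
  (n ≤ ((Finset.range m).filter (fun k => 1/2 ≤ fc F a k)).card ∧
      avgDisc F a (fun k => 1/2 ≤ fc F a k) m ≤ -(1/4)) ∨
  (n ≤ ((Finset.range m).filter (fun k => fc F a k < 1/2)).card ∧
      (1/4 : ℝ) ≤ avgDisc F a (fun k => fc F a k < 1/2) m)

lemma badAt_congr {n m : ℕ} (h : ∀ i < m, a i = b i) (hb : badAt F n a m) :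
    badAt F n b m := by
  rcases hb with ⟨h1, h2⟩ | ⟨h1, h2⟩
  · left
    refine ⟨?_, ?_⟩
    · rw [← filterfc_congr h (fun x => 1/2 ≤ x)]; exact h1
    · rw [← avgDisc_congr h (fun x => 1/2 ≤ x)]; exact h2
  · right
    refine ⟨?_, ?_⟩
    · rw [← filterfc_congr h (fun x => x < 1/2)]; exact h1
    · rw [← avgDisc_congr h (fun x => x < 1/2)]; exact h2

/- cylinders -/

lemma cylinder_mem_nhds (a : ℕ → Bool) (p : ℕ) :
    {b : ℕ → Bool | ∀ i < p, b i = a i} ∈ 𝓝 a := by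
  have heq : {b : ℕ → Bool | ∀ i < p, b i = a i}
      = ⋂ i ∈ Finset.range p, {b : ℕ → Bool | b i = a i} := by
    ext b; simp [Finset.mem_range]
  rw [heq]
  rw [Filter.biInter_finset_mem]
  intro i _
  have hopen : IsOpen {b : ℕ → Bool | b i = a i} := by
    have : {b : ℕ → Bool | b i = a i} = (fun b : ℕ → Bool => b i) ⁻¹' {a i} := rfl
    rw [this]
    exact (continuous_apply i).isOpen_preimage _ (isOpen_discrete _)
  exact hopen.mem_nhds rfl

lemma exists_cylinder_subset {s : Set (ℕ → Bool)} {a : ℕ → Bool} (h : s ∈ 𝓝 a) :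
    ∃ p, {b : ℕ → Bool | ∀ i < p, b i = a i} ⊆ s := by
  rw [nhds_pi, Filter.mem_pi] at h
  obtain ⟨I, hIf, t, ht, hsub⟩ := h
  obtain ⟨q, hq⟩ := hIf.bddAbove
  refine ⟨q + 1, fun b hb => hsub ?_⟩
  intro i hi
  have hiq : i < q + 1 := Nat.lt_succ_of_le (hq hi)
  have : b i = a i := hb i hiq
  rw [this]
  exact mem_of_mem_nhds (ht i)

lemma isOpen_of_prefix {S : Set (ℕ → Bool)}
    (h : ∀ a ∈ S, ∃ p, ∀ b : ℕ → Bool, (∀ i < p, b i = a i) → b ∈ S) : IsOpen S := by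
  rw [isOpen_iff_mem_nhds]
  intro a ha
  obtain ⟨p, hp⟩ := h a ha
  exact Filter.mem_of_superset (cylinder_mem_nhds a p) (fun b hb => hp b hb)

lemma dense_of_prefix {S : Set (ℕ → Bool)}
    (h : ∀ (a : ℕ → Bool) (p : ℕ), ∃ b ∈ S, ∀ i < p, b i = a i) : Dense S := by
  intro a
  rw [mem_closure_iff_nhds]
  intro t ht
  obtain ⟨p, hp⟩ := exists_cylinder_subset ht
  obtain ⟨b, hbS, hb⟩ := h a p
  exact ⟨b, hp hb, hbS⟩

/- adversarial extension -/

/-- Play like `a` up to day `p`, and adversarially afterwards. -/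
noncomputable def advFrom (F : List Bool → ℝ) (a : ℕ → Bool) (p : ℕ) : ℕ → Bool
  | k => if k < p then a k else
      if F (List.ofFn (fun i : Fin k => advFrom F a p i)) < 1/2 then true else false

lemma advFrom_lt {p k : ℕ} (hk : k < p) : advFrom F a p k = a k := by
  rw [advFrom]; simp [hk]

lemma fc_advFrom (p k : ℕ) :
    fc F (advFrom F a p) k = F (List.ofFn (fun i : Fin k => advFrom F a p i)) := rfl

lemma advFrom_ge {p k : ℕ} (hk : p ≤ k) :
    advFrom F a p k = if fc F (advFrom F a p) k < 1/2 then true else false := by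
  conv_lhs => rw [advFrom]
  simp [Nat.not_lt.mpr hk, fc_advFrom]

lemma disc_advFrom_hi {p k : ℕ} (hk : p ≤ k) (hhi : 1/2 ≤ fc F (advFrom F a p) k) :
    disc F (advFrom F a p) k ≤ -(1/2) := by
  have hb : advFrom F a p k = false := by
    rw [advFrom_ge hk, if_neg (not_lt.mpr hhi)]
  unfold disc
  rw [hb]
  simp only [Bool.false_eq_true, if_false]
  linarith

lemma disc_advFrom_lo {p k : ℕ} (hk : p ≤ k) (hlo : fc F (advFrom F a p) k < 1/2) :
    (1/2 : ℝ) ≤ disc F (advFrom F a p) k := by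
  have hb : advFrom F a p k = true := by
    rw [advFrom_ge hk, if_pos hlo]
  unfold disc
  rw [hb]
  simp only [if_true]
  linarith

lemma disc_bounds (hF : ∀ w, F w ∈ Set.Icc (0:ℝ) 1) (a : ℕ → Bool) (k : ℕ) :
    -1 ≤ disc F a k ∧ disc F a k ≤ 1 := by
  have := hF (List.ofFn (fun i : Fin k => a i))
  unfold disc fc
  rcases this with ⟨h0, h1⟩
  by_cases h : a k <;> simp [h] <;> constructor <;> linarith

/- density: the adversarial extension is bad at some stage -/

lemma badAt_advFrom (hF : ∀ w, F w ∈ Set.Icc (0:ℝ) 1) (a : ℕ → Bool) (p n : ℕ) :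
    ∃ m, badAt F n (advFrom F a p) m := by
  set b := advFrom F a p with hbdef
  set N : ℕ := max (5 * p) n + 1 with hN
  set m : ℕ := p + 2 * N with hm
  have hpm : p ≤ m := by omega
  refine ⟨m, ?_⟩
  -- split range m into range p and Ico p m
  have hsplit : Finset.range m = Finset.range p ∪ Finset.Ico p m := by
    rw [Finset.range_eq_Ico, Finset.range_eq_Ico, Finset.Ico_union_Ico_eq_Ico (Nat.zero_le p) hpm]
  have hdisj : Disjoint (Finset.range p) (Finset.Ico p m) := by
    rw [Finset.disjoint_left]
    intro k hk hk'
    rw [Finset.mem_range] at hk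
    rw [Finset.mem_Ico] at hk'
    omega
  -- the two adversarial groups partition Ico p m
  set A1 := (Finset.Ico p m).filter (fun k => 1/2 ≤ fc F b k) with hA1
  set B1 := (Finset.Ico p m).filter (fun k => fc F b k < 1/2) with hB1
  have hpart : A1.card + B1.card = 2 * N := by
    have h1 : B1 = (Finset.Ico p m).filter (fun k => ¬ (1/2 ≤ fc F b k)) := by
      apply Finset.filter_congr
      intro k _
      exact not_le.symm
    have h2 := Finset.card_filter_add_card_filter_not
      (s := Finset.Ico p m) (p := fun k => 1/2 ≤ fc F b k)
    rw [Nat.card_Ico] at h2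
    rw [hA1, h1]
    omega
  have hNge : N ≤ A1.card ∨ N ≤ B1.card := by omega
  rcases hNge with hHi | hLo
  · -- high group case
    left
    set A0 := (Finset.range p).filter (fun k => 1/2 ≤ fc F b k) with hA0
    have hA : (Finset.range m).filter (fun k => 1/2 ≤ fc F b k) = A0 ∪ A1 := by
      rw [hsplit, Finset.filter_union]
    have hdisj' : Disjoint A0 A1 :=
      Finset.disjoint_filter_filter hdisj
    have hcard : ((Finset.range m).filter (fun k => 1/2 ≤ fc F b k)).card
        = A0.card + A1.card := by
      rw [hA, Finset.card_union_of_disjoint hdisj']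
    have hA0le : A0.card ≤ p := by
      calc A0.card ≤ (Finset.range p).card := Finset.card_filter_le _ _
        _ = p := Finset.card_range p
    constructor
    · omega
    · -- average bound
      have hsum : ∑ k ∈ (Finset.range m).filter (fun k => 1/2 ≤ fc F b k), disc F b k
          = (∑ k ∈ A0, disc F b k) + ∑ k ∈ A1, disc F b k := by
        rw [hA, Finset.sum_union hdisj']
      have hs0 : (∑ k ∈ A0, disc F b k) ≤ (p : ℝ) := by
        calc (∑ k ∈ A0, disc F b k) ≤ A0.card • (1:ℝ) :=
              Finset.sum_le_card_nsmul _ _ _ (fun k _ => (disc_bounds hF b k).2)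
          _ = (A0.card : ℝ) := by simp
          _ ≤ (p : ℝ) := by exact_mod_cast hA0le
      have hs1 : (∑ k ∈ A1, disc F b k) ≤ (A1.card : ℝ) * (-(1/2)) := by
        have := Finset.sum_le_card_nsmul A1 (fun k => disc F b k) (-(1/2)) ?_
        · simpa [nsmul_eq_mul] using this
        · intro k hk
          rw [hA1, Finset.mem_filter, Finset.mem_Ico] at hk
          exact disc_advFrom_hi hk.1.1 hk.2
      have hcpos : (0 : ℝ) < ((Finset.range m).filter (fun k => 1/2 ≤ fc F b k)).card := by
        have : 1 ≤ A0.card + A1.card := by omega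
        rw [hcard]
        exact_mod_cast this
      show avgDisc F b (fun k => 1/2 ≤ fc F b k) m ≤ -(1/4)
      unfold avgDisc
      rw [div_le_iff₀ hcpos]
      have hc1 : (((Finset.range m).filter (fun k => 1/2 ≤ fc F b k)).card : ℝ)
          ≤ (p : ℝ) + (A1.card : ℝ) := by
        rw [hcard]
        push_cast
        exact_mod_cast by omega
      have hc2 : (5 * (p:ℝ) + 1) ≤ (A1.card : ℝ) := by
        have : 5 * p + 1 ≤ A1.card := by omega
        exact_mod_cast this
      have hc3 : (A1.card : ℝ)
          ≤ (((Finset.range m).filter (fun k => 1/2 ≤ fc F b k)).card : ℝ) := by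
        rw [hcard]; push_cast; linarith [(Nat.cast_nonneg A0.card : (0:ℝ) ≤ (A0.card:ℝ))]
      rw [hsum]
      nlinarith [hcpos]
  · -- low group case
    right
    set B0 := (Finset.range p).filter (fun k => fc F b k < 1/2) with hB0
    have hB : (Finset.range m).filter (fun k => fc F b k < 1/2) = B0 ∪ B1 := by
      rw [hsplit, Finset.filter_union]
    have hdisj' : Disjoint B0 B1 :=
      Finset.disjoint_filter_filter hdisj
    have hcard : ((Finset.range m).filter (fun k => fc F b k < 1/2)).card
        = B0.card + B1.card := by
      rw [hB, Finset.card_union_of_disjoint hdisj']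
    have hB0le : B0.card ≤ p := by
      calc B0.card ≤ (Finset.range p).card := Finset.card_filter_le _ _
        _ = p := Finset.card_range p
    constructor
    · omega
    · have hsum : ∑ k ∈ (Finset.range m).filter (fun k => fc F b k < 1/2), disc F b k
          = (∑ k ∈ B0, disc F b k) + ∑ k ∈ B1, disc F b k := by
        rw [hB, Finset.sum_union hdisj']
      have hs0 : -(p : ℝ) ≤ (∑ k ∈ B0, disc F b k) := by
        have := Finset.card_nsmul_le_sum B0 (fun k => disc F b k) (-1)
          (fun k _ => (disc_bounds hF b k).1)
        have h' : (B0.card : ℝ) * (-1) ≤ ∑ k ∈ B0, disc F b k := by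
          simpa [nsmul_eq_mul] using this
        have : (B0.card : ℝ) ≤ (p : ℝ) := by exact_mod_cast hB0le
        linarith
      have hs1 : (B1.card : ℝ) * (1/2) ≤ (∑ k ∈ B1, disc F b k) := by
        have := Finset.card_nsmul_le_sum B1 (fun k => disc F b k) (1/2) ?_
        · simpa [nsmul_eq_mul] using this
        · intro k hk
          rw [hB1, Finset.mem_filter, Finset.mem_Ico] at hk
          exact disc_advFrom_lo hk.1.1 hk.2
      have hcpos : (0 : ℝ) < ((Finset.range m).filter (fun k => fc F b k < 1/2)).card := by
        have : 1 ≤ B0.card + B1.card := by omega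
        rw [hcard]
        exact_mod_cast this
      show (1/4 : ℝ) ≤ avgDisc F b (fun k => fc F b k < 1/2) m
      unfold avgDisc
      rw [le_div_iff₀ hcpos]
      have hc1 : (((Finset.range m).filter (fun k => fc F b k < 1/2)).card : ℝ)
          ≤ (p : ℝ) + (B1.card : ℝ) := by
        rw [hcard]
        push_cast
        exact_mod_cast by omega
      have hc2 : (5 * (p:ℝ) + 1) ≤ (B1.card : ℝ) := by
        have : 5 * p + 1 ≤ B1.card := by omega
        exact_mod_cast this
      rw [hsum]
      nlinarith [hcpos]

/- from all stages bad, non-calibration -/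

lemma not_calibrated_of_badAt {a : ℕ → Bool}
    (h : ∀ n, ∃ m, badAt F n a m) : ¬ HighLowCalibrated F a := by
  rintro ⟨hA, hB⟩
  have key : (∀ N, ∃ m, N ≤ ((Finset.range m).filter (fun k => 1/2 ≤ fc F a k)).card ∧
        avgDisc F a (fun k => 1/2 ≤ fc F a k) m ≤ -(1/4)) ∨
      (∀ N, ∃ m, N ≤ ((Finset.range m).filter (fun k => fc F a k < 1/2)).card ∧
        (1/4:ℝ) ≤ avgDisc F a (fun k => fc F a k < 1/2) m) := by
    by_contra hc
    push_neg at hc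
    obtain ⟨⟨N1, h1⟩, ⟨N2, h2⟩⟩ := hc
    obtain ⟨m, hm⟩ := h (max N1 N2)
    rcases hm with ⟨hm1, hm2⟩ | ⟨hm1, hm2⟩
    · exact absurd hm2 (not_le.mpr (h1 m (le_trans (le_max_left _ _) hm1)))
    · exact absurd hm2 (not_le.mpr (h2 m (le_trans (le_max_right _ _) hm1)))
  rcases key with hP | hQ
  · rcases hA with hfin | htend
    · obtain ⟨m, hm1, _⟩ := hP (hfin.toFinset.card + 1)
      have hsub : (Finset.range m).filter (fun k => 1/2 ≤ fc F a k) ⊆ hfin.toFinset := by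
        intro k hk
        rw [Set.Finite.mem_toFinset]
        exact (Finset.mem_filter.mp hk).2
      have := Finset.card_le_card hsub
      omega
    · have hev : ∀ᶠ m in atTop, -(1/4 : ℝ) <
          avgDisc F a (fun k => 1/2 ≤ fc F a k) m :=
        htend.eventually (eventually_gt_nhds (by norm_num))
      obtain ⟨M, hM⟩ := eventually_atTop.mp hev
      obtain ⟨m, hm1, hm2⟩ := hP M
      have hmM : M ≤ m := by
        have h1 : ((Finset.range m).filter (fun k => 1/2 ≤ fc F a k)).card ≤ m := by
          calc _ ≤ (Finset.range m).card := Finset.card_filter_le _ _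
            _ = m := Finset.card_range m
        omega
      exact absurd hm2 (not_le.mpr (hM m hmM))
  · rcases hB with hfin | htend
    · obtain ⟨m, hm1, _⟩ := hQ (hfin.toFinset.card + 1)
      have hsub : (Finset.range m).filter (fun k => fc F a k < 1/2) ⊆ hfin.toFinset := by
        intro k hk
        rw [Set.Finite.mem_toFinset]
        exact (Finset.mem_filter.mp hk).2
      have := Finset.card_le_card hsub
      omega
    · have hev : ∀ᶠ m in atTop,
          avgDisc F a (fun k => fc F a k < 1/2) m < (1/4 : ℝ) :=
        htend.eventually (eventually_lt_nhds (by norm_num))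
      obtain ⟨M, hM⟩ := eventually_atTop.mp hev
      obtain ⟨m, hm1, hm2⟩ := hQ M
      have hmM : M ≤ m := by
        have h1 : ((Finset.range m).filter (fun k => fc F a k < 1/2)).card ≤ m := by
          calc _ ≤ (Finset.range m).card := Finset.card_filter_le _ _
            _ = m := Finset.card_range m
        omega
      exact absurd hm2 (not_le.mpr (hM m hmM))

/- residual membership of the bad sets -/

lemma E_mem_residual (hF : ∀ w, F w ∈ Set.Icc (0:ℝ) 1) (n : ℕ) :
    {a : ℕ → Bool | ∃ m, badAt F n a m} ∈ residual (ℕ → Bool) := by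
  apply residual_of_dense_open
  · apply isOpen_of_prefix
    rintro a ⟨m, hm⟩
    exact ⟨m, fun b hb => ⟨m, badAt_congr (fun i hi => (hb i hi).symm) hm⟩⟩
  · apply dense_of_prefix
    intro a p
    exact ⟨advFrom F a p, badAt_advFrom hF a p n, fun i hi => advFrom_lt hi⟩

/- countable sets are meagre in Cantor space -/

lemma singleton_meagre (x : ℕ → Bool) : IsMeagre ({x} : Set (ℕ → Bool)) := by
  rw [IsMeagre]
  apply residual_of_dense_open isOpen_compl_singleton
  apply dense_of_prefix
  intro a p
  refine ⟨fun i => if i < p then a i else !(x i), ?_, ?_⟩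
  · intro hx
    have := congrFun hx p
    simp at this
  · intro i hi
    simp [hi]

lemma countable_isMeagre {S : Set (ℕ → Bool)} (h : S.Countable) : IsMeagre S := by
  rcases S.eq_empty_or_nonempty with rfl | hne
  · exact IsMeagre.empty
  · obtain ⟨f, rfl⟩ := h.exists_eq_range hne
    have : Set.range f = ⋃ n, {f n} := by
      ext y; simp [Set.range]
    rw [this]
    exact isMeagre_iUnion (fun n => singleton_meagre (f n))

end Aux

theorem countable_family_noncalibration_residual_and_uncountable
    (F : ℕ → List Bool → ℝ) (hF : ∀ i w, F i w ∈ Set.Icc (0 : ℝ) 1) :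
    {a : ℕ → Bool | ∀ i, ¬ HighLowCalibrated (F i) a} ∈ residual (ℕ → Bool) ∧
    ¬ {a : ℕ → Bool | ∀ i, ¬ HighLowCalibrated (F i) a}.Countable := by
  have hres : {a : ℕ → Bool | ∀ i, ¬ HighLowCalibrated (F i) a} ∈ residual (ℕ → Bool) := by
    have hmem : (⋂ i, ⋂ n, {a : ℕ → Bool | ∃ m, badAt (F i) n a m}) ∈ residual (ℕ → Bool) :=
      countable_iInter_mem.mpr (fun i =>
        countable_iInter_mem.mpr (fun n => E_mem_residual (hF i) n))
    refine Filter.mem_of_superset hmem ?_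
    intro a ha i
    apply not_calibrated_of_badAt
    intro n
    have := Set.mem_iInter.mp (Set.mem_iInter.mp ha i) n
    exact this
  refine ⟨hres, ?_⟩
  intro hcount
  have hmeag : IsMeagre {a : ℕ → Bool | ∀ i, ¬ HighLowCalibrated (F i) a} :=
    countable_isMeagre hcount
  have hempty : (∅ : Set (ℕ → Bool)) ∈ residual (ℕ → Bool) := by
    have := Filter.inter_mem hres hmeag
    simpa using this
  have : Dense (∅ : Set (ℕ → Bool)) := dense_of_mem_residual hempty
  simpa using this.nonempty.ne_empty
end

section
/- Given any forecasting system F and any finite binary string w, there exists a finite binary extension v of w such that, along v, either the mean discrepancy over the days (among |v| days) with forecast π_k < 1/2 is at least 1/4, or the mean discrepancy over the days with forecast π_k ≥ 1/2 is at most −1/4. -/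
open Filter Topology

/-- Forecast along a finite string `v` on day `k`: `F` applied to the first `k` bits. -/
noncomputable def fcStr (F : List Bool → ℝ) (v : List Bool) (k : ℕ) : ℝ :=
  F (v.take k)

/-- Discrepancy along a finite string `v` on day `k`. -/
noncomputable def discStr (F : List Bool → ℝ) (v : List Bool) (k : ℕ) : ℝ :=
  (if v.getD k false then 1 else 0) - fcStr F v k

open Classical in
/-- Mean discrepancy along a finite string `v` over the days `k < |v|` satisfying `P`. -/
noncomputable def meanDiscStr (F : List Bool → ℝ) (v : List Bool) (P : ℕ → Prop) : ℝ :=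
  (∑ k ∈ (Finset.range v.length).filter P, discStr F v k) /
    (((Finset.range v.length).filter P).card : ℝ)

/-- The position after round `n` of the Banach–Mazur game on Cantor space in which
Player 2 uses strategy `σ` (responding to the current finite string by appending
`σ` of it) and Player 1's successive moves are the appended strings `f 0, f 1, …`
(Player 1 moves first). -/
def posSeq (σ : List Bool → List Bool) (f : ℕ → List Bool) : ℕ → List Bool
  | 0 => f 0
  | n + 1 => (posSeq σ f n ++ σ (posSeq σ f n)) ++ f (n + 1)

/-- `a` is an infinite binary sequence compatible with every position of the play,
i.e. `a` lies in the intersection of the chosen cylinder sets. -/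
def IsLimit (σ : List Bool → List Bool) (f : ℕ → List Bool) (a : ℕ → Bool) : Prop :=
  ∀ n k, k < (posSeq σ f n).length → (posSeq σ f n).getD k false = a k

open Classical in
/-- Extend `w` adversarially: append `1` iff the current forecast is `< 1/2`. -/
noncomputable def extSeq (F : List Bool → ℝ) (w : List Bool) : ℕ → List Bool
  | 0 => w
  | j+1 => extSeq F w j ++ [if F (extSeq F w j) < 1/2 then true else false]

lemma extSeq_length (F : List Bool → ℝ) (w : List Bool) (j : ℕ) :
    (extSeq F w j).length = w.length + j := by
  induction j with
  | zero => rfl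
  | succ j ih => simp [extSeq, ih]; omega

lemma extSeq_prefix (F : List Bool → ℝ) (w : List Bool) {i j : ℕ} (h : i ≤ j) :
    extSeq F w i <+: extSeq F w j := by
  induction j with
  | zero => simp_all
  | succ j ih =>
    rcases Nat.eq_or_lt_of_le h with h' | h'
    · subst h'; exact List.prefix_rfl
    · exact (ih (Nat.lt_succ_iff.mp h')).trans ⟨_, rfl⟩

open Classical in
theorem extension_lemma
    (F : List Bool → ℝ) (hF : ∀ w, F w ∈ Set.Icc (0 : ℝ) 1) (w : List Bool) :
    ∃ v : List Bool, w <+: v ∧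
      ((((Finset.range v.length).filter (fun k => fcStr F v k < 1/2)).Nonempty ∧
          1/4 ≤ meanDiscStr F v (fun k => fcStr F v k < 1/2)) ∨
        (((Finset.range v.length).filter (fun k => 1/2 ≤ fcStr F v k)).Nonempty ∧
          meanDiscStr F v (fun k => 1/2 ≤ fcStr F v k) ≤ -(1/4))) := by
  classical
  set n0 := w.length with hn0
  set N := 10 * n0 + 2 with hN
  set v := extSeq F w N with hv
  have hlen : v.length = n0 + N := extSeq_length F w N
  refine ⟨v, ?_, ?_⟩
  · exact extSeq_prefix F w (Nat.zero_le N)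
  -- forecast on new day `n0 + j` equals `F (extSeq F w j)`
  have htake : ∀ j ≤ N, v.take (n0 + j) = extSeq F w j := by
    intro j hj
    obtain ⟨t, ht⟩ := extSeq_prefix F w hj
    have : n0 + j = (extSeq F w j).length := (extSeq_length F w j).symm
    rw [hv, ← ht, this, List.take_left]
  have hfc : ∀ j < N, fcStr F v (n0 + j) = F (extSeq F w j) := by
    intro j hj
    unfold fcStr
    rw [htake j hj.le]
  have hgetD : ∀ j < N, v.getD (n0 + j) false
      = (if F (extSeq F w j) < 1/2 then true else false) := by
    intro j hj
    obtain ⟨t, ht⟩ := extSeq_prefix F w (Nat.succ_le_of_lt hj)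
    have hlt : n0 + j < (extSeq F w (j+1)).length := by
      rw [extSeq_length]; omega
    rw [hv, ← ht, List.getD_append _ _ _ _ hlt]
    show ((extSeq F w j ++ [_]).getD (n0 + j) false) = _
    have hle : (extSeq F w j).length ≤ n0 + j := by rw [extSeq_length]
    rw [List.getD_append_right _ _ _ _ hle]
    rw [extSeq_length]
    simp [hn0]
  have hdisc : ∀ j < N, discStr F v (n0 + j)
      = (if F (extSeq F w j) < 1/2 then 1 else 0) - F (extSeq F w j) := by
    intro j hj
    unfold discStr
    rw [hfc j hj, hgetD j hj]
    split <;> simp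
  -- global bounds on discrepancies
  have hbound : ∀ k, -1 ≤ discStr F v k ∧ discStr F v k ≤ 1 := by
    intro k
    unfold discStr fcStr
    have h1 := (hF (v.take k)).1
    have h2 := (hF (v.take k)).2
    split <;> constructor <;> linarith
  set PL : ℕ → Prop := fun k => fcStr F v k < 1/2 with hPL
  set PH : ℕ → Prop := fun k => 1/2 ≤ fcStr F v k with hPH
  set Lnew := (Finset.Ico n0 v.length).filter PL with hLnew
  set Hnew := (Finset.Ico n0 v.length).filter PH with hHnew
  have hcards : Lnew.card + Hnew.card = N := by
    have h1 : (Finset.Ico n0 v.length).filter (fun k => ¬ PL k) = Hnew := by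
      apply Finset.filter_congr
      intro k _
      simp [hPL, hPH, not_lt]
    calc Lnew.card + Hnew.card
        = Lnew.card + ((Finset.Ico n0 v.length).filter (fun k => ¬ PL k)).card := by
          rw [h1]
      _ = (Finset.Ico n0 v.length).card := Finset.card_filter_add_card_filter_not _
      _ = N := by rw [Nat.card_Ico, hlen]; omega
  have hsub_range : Finset.Ico n0 v.length ⊆ Finset.range v.length := by
    intro k hk
    simp only [Finset.mem_Ico] at hk
    simp [hk.2]
  have hrange_split : Finset.range v.length = Finset.range n0 ∪ Finset.Ico n0 v.length := by
    simp only [Finset.range_eq_Ico]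
    rw [Finset.Ico_union_Ico_eq_Ico (Nat.zero_le n0) (by omega : n0 ≤ v.length)]
  have hdisj : Disjoint (Finset.range n0) (Finset.Ico n0 v.length) := by
    rw [Finset.range_eq_Ico]
    exact Finset.Ico_disjoint_Ico_consecutive 0 n0 v.length
  -- new-day discrepancy bounds
  have hnewL : ∀ k ∈ Lnew, 1/2 ≤ discStr F v k := by
    intro k hk
    simp only [hLnew, Finset.mem_filter, Finset.mem_Ico] at hk
    obtain ⟨⟨hk1, hk2⟩, hkP⟩ := hk
    obtain ⟨j, rfl⟩ : ∃ j, k = n0 + j := ⟨k - n0, by omega⟩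
    have hjN : j < N := by omega
    have hlt : F (extSeq F w j) < 1/2 := by rwa [hPL, hfc j hjN] at hkP
    rw [hdisc j hjN, if_pos hlt]
    linarith
  have hnewH : ∀ k ∈ Hnew, discStr F v k ≤ -(1/2) := by
    intro k hk
    simp only [hHnew, Finset.mem_filter, Finset.mem_Ico] at hk
    obtain ⟨⟨hk1, hk2⟩, hkP⟩ := hk
    obtain ⟨j, rfl⟩ : ∃ j, k = n0 + j := ⟨k - n0, by omega⟩
    have hjN : j < N := by omega
    have hge : ¬ F (extSeq F w j) < 1/2 := by
      rw [hPH, hfc j hjN] at hkP; linarith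
    rw [hdisc j hjN, if_neg hge]
    push_neg at hge
    linarith
  -- one of the two groups gets at least half the new days
  rcases (by omega : 5 * n0 + 1 ≤ Lnew.card ∨ 5 * n0 + 1 ≤ Hnew.card) with hm | hm
  · -- low-forecast group
    left
    set Lfin := (Finset.range v.length).filter PL with hLfin
    set Lold := (Finset.range n0).filter PL with hLold
    have hLsplit : Lfin = Lold ∪ Lnew := by
      rw [hLfin, hrange_split, Finset.filter_union]
    have hdisj' : Disjoint Lold Lnew :=
      hdisj.mono (Finset.filter_subset _ _) (Finset.filter_subset _ _)
    have hLoldcard : Lold.card ≤ n0 := by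
      calc Lold.card ≤ (Finset.range n0).card := Finset.card_filter_le _ _
        _ = n0 := Finset.card_range n0
    have hLcard : Lfin.card = Lold.card + Lnew.card := by
      rw [hLsplit, Finset.card_union_of_disjoint hdisj']
    have hLpos : 0 < Lfin.card := by omega
    constructor
    · exact Finset.card_pos.mp hLpos
    · have hsum : ∑ k ∈ Lfin, discStr F v k
          = ∑ k ∈ Lold, discStr F v k + ∑ k ∈ Lnew, discStr F v k := by
        rw [hLsplit, Finset.sum_union hdisj']
      have hSold : -(n0 : ℝ) ≤ ∑ k ∈ Lold, discStr F v k := by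
        have h1 := Finset.card_nsmul_le_sum Lold _ (-1 : ℝ) (fun k _ => (hbound k).1)
        have h2 : (Lold.card : ℝ) ≤ (n0 : ℝ) := by exact_mod_cast hLoldcard
        simp only [nsmul_eq_mul, mul_neg, mul_one] at h1
        linarith
      have hSnew : (Lnew.card : ℝ) * (1/2) ≤ ∑ k ∈ Lnew, discStr F v k := by
        have := Finset.card_nsmul_le_sum Lnew _ (1/2 : ℝ) hnewL
        simpa [nsmul_eq_mul] using this
      have hmR : (5 * n0 + 1 : ℝ) ≤ (Lnew.card : ℝ) := by exact_mod_cast hm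
      have hcR : (Lfin.card : ℝ) ≤ (n0 : ℝ) + (Lnew.card : ℝ) := by
        have : Lfin.card ≤ n0 + Lnew.card := by omega
        exact_mod_cast this
      rw [meanDiscStr, le_div_iff₀ (by exact_mod_cast hLpos)]
      have : ∑ k ∈ Lfin, discStr F v k ≥ -(n0:ℝ) + (Lnew.card : ℝ) * (1/2) := by
        rw [hsum]; linarith
      calc (1/4 : ℝ) * (Lfin.card : ℝ) ≤ (1/4) * ((n0:ℝ) + Lnew.card) := by linarith
        _ ≤ -(n0:ℝ) + (Lnew.card : ℝ) * (1/2) := by linarith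
        _ ≤ ∑ k ∈ Lfin, discStr F v k := this
  · -- high-forecast group
    right
    set Hfin := (Finset.range v.length).filter PH with hHfin
    set Hold := (Finset.range n0).filter PH with hHold
    have hHsplit : Hfin = Hold ∪ Hnew := by
      rw [hHfin, hrange_split, Finset.filter_union]
    have hdisj' : Disjoint Hold Hnew :=
      hdisj.mono (Finset.filter_subset _ _) (Finset.filter_subset _ _)
    have hHoldcard : Hold.card ≤ n0 := by
      calc Hold.card ≤ (Finset.range n0).card := Finset.card_filter_le _ _
        _ = n0 := Finset.card_range n0
    have hHcard : Hfin.card = Hold.card + Hnew.card := by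
      rw [hHsplit, Finset.card_union_of_disjoint hdisj']
    have hHpos : 0 < Hfin.card := by omega
    constructor
    · exact Finset.card_pos.mp hHpos
    · have hsum : ∑ k ∈ Hfin, discStr F v k
          = ∑ k ∈ Hold, discStr F v k + ∑ k ∈ Hnew, discStr F v k := by
        rw [hHsplit, Finset.sum_union hdisj']
      have hSold : ∑ k ∈ Hold, discStr F v k ≤ (n0 : ℝ) := by
        have h1 : ∑ k ∈ Hold, discStr F v k ≤ Hold.card • (1 : ℝ) :=
          Finset.sum_le_card_nsmul Hold _ 1 (fun k _ => (hbound k).2)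
        have h2 : (Hold.card : ℝ) ≤ (n0 : ℝ) := by exact_mod_cast hHoldcard
        simp only [nsmul_eq_mul, mul_one] at h1
        linarith
      have hSnew : ∑ k ∈ Hnew, discStr F v k ≤ (Hnew.card : ℝ) * (-(1/2)) := by
        have := Finset.sum_le_card_nsmul Hnew _ (-(1/2) : ℝ) hnewH
        simpa [nsmul_eq_mul] using this
      have hmR : (5 * n0 + 1 : ℝ) ≤ (Hnew.card : ℝ) := by exact_mod_cast hm
      have hcR : (Hfin.card : ℝ) ≤ (n0 : ℝ) + (Hnew.card : ℝ) := by
        have : Hfin.card ≤ n0 + Hnew.card := by omega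
        exact_mod_cast this
      rw [meanDiscStr, div_le_iff₀ (by exact_mod_cast hHpos)]
      calc ∑ k ∈ Hfin, discStr F v k
          ≤ (n0:ℝ) + (Hnew.card : ℝ) * (-(1/2)) := by rw [hsum]; linarith
        _ ≤ -(1/4) * ((n0:ℝ) + Hnew.card) := by linarith
        _ ≤ -(1/4) * (Hfin.card : ℝ) := by nlinarith
end
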